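/- For positive integers n and prime power q, the quantity λ₁ = ((q^{n−1}−1)/(q³−1)) · ((q^{n−3}−1)/(q²−1)) · ((q^{n−4}−1)/(q−1)) is an integer if and only if n ≡ 0, 1, 3, or 4 (mod 6), for n > 6. -/
import Mathlib

private lemma aux_pow_sub_one_dvd {Q : ℤ} {d e : ℕ} (h : d ∣ e) :
    Q ^ d - 1 ∣ Q ^ e - 1 := by
  obtain ⟨k, rfl⟩ := h
  have := sub_dvd_pow_sub_pow (Q ^ d) 1 k
  simpa [pow_mul] using this

private lemma aux_nine_not_dvd (q : ℕ) : ¬ (9 ∣ q ^ 2 + q + 1) := by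
  intro h
  have hmq : q % 9 ≡ q [MOD 9] := Nat.mod_modEq q 9
  have h2 : (q % 9) ^ 2 + q % 9 + 1 ≡ q ^ 2 + q + 1 [MOD 9] :=
    Nat.ModEq.add_right 1 (Nat.ModEq.add (hmq.pow 2) hmq)
  have h0 : q ^ 2 + q + 1 ≡ 0 [MOD 9] := (Nat.modEq_zero_iff_dvd).mpr h
  have h3 : 9 ∣ (q % 9) ^ 2 + q % 9 + 1 :=
    (Nat.modEq_zero_iff_dvd).mp (h2.trans h0)
  have hr : q % 9 < 9 := Nat.mod_lt _ (by norm_num)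
  interval_cases h : q % 9 <;> omega

private lemma aux_exists_prime (q : ℕ) (hq : 2 ≤ q) :
    ∃ p : ℕ, p.Prime ∧ p ≠ 3 ∧ p ∣ q ^ 2 + q + 1 := by
  have h9 : ¬ (9 ∣ q ^ 2 + q + 1) := aux_nine_not_dvd q
  have h7 : 7 ≤ q ^ 2 + q + 1 := by nlinarith
  by_cases h3 : 3 ∣ q ^ 2 + q + 1
  · obtain ⟨t, ht⟩ := h3
    have ht3 : ¬ (3 ∣ t) := fun ⟨s, hs⟩ => h9 ⟨s, by omega⟩
    have ht2 : 2 ≤ t := by omega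
    refine ⟨t.minFac, Nat.minFac_prime (by omega), ?_, ht.symm ▸ Dvd.dvd.mul_left t.minFac_dvd 3⟩
    intro he
    exact ht3 (he ▸ t.minFac_dvd)
  · refine ⟨(q ^ 2 + q + 1).minFac, Nat.minFac_prime (by omega), ?_, Nat.minFac_dvd _⟩
    intro he
    exact h3 (he ▸ Nat.minFac_dvd _)

private lemma aux_ord_three {p q : ℕ} (hp : p.Prime) (hp3 : p ≠ 3)
    (hd : p ∣ q ^ 2 + q + 1) {m : ℕ} (hm : ¬ (3 ∣ m)) :
    ¬ ((p : ℤ) ∣ (q : ℤ) ^ m - 1) := by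
  haveI : Fact p.Prime := ⟨hp⟩
  set x : ZMod p := (q : ZMod p) with hx
  have h0 : x ^ 2 + x + 1 = 0 := by
    have := (ZMod.natCast_eq_zero_iff _ p).mpr hd
    push_cast at this
    simpa [hx] using this
  have h3 : x ^ 3 = 1 := by
    have : x ^ 3 - 1 = (x - 1) * (x ^ 2 + x + 1) := by ring
    rw [h0, mul_zero] at this
    linear_combination this
  have hx1 : x ≠ 1 := by
    intro h1
    rw [h1] at h0
    have h30 : ((3 : ℕ) : ZMod p) = 0 := by push_cast; linear_combination h0
    have := (ZMod.natCast_eq_zero_iff 3 p).mp h30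
    exact hp3 ((Nat.prime_dvd_prime_iff_eq hp Nat.prime_three).mp this)
  have hx2 : x ^ 2 ≠ 1 := by
    intro h2
    have hx3 : x ^ 3 = x ^ 2 * x := by ring
    rw [h2, one_mul, h3] at hx3
    exact hx1 hx3.symm
  intro hdvd
  have h0' : (((q : ℤ) ^ m - 1 : ℤ) : ZMod p) = 0 :=
    (ZMod.intCast_zmod_eq_zero_iff_dvd _ p).mpr hdvd
  push_cast at h0'
  have hxm : x ^ m = 1 := by
    have : x ^ m - 1 = 0 := by simpa [hx] using h0'
    linear_combination this
  have hmod : m % 3 = 1 ∨ m % 3 = 2 := by omega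
  have hdecomp : x ^ m = x ^ (m % 3) := by
    conv_lhs => rw [← Nat.div_add_mod m 3]
    rw [pow_add, pow_mul, h3, one_pow, one_mul]
  rcases hmod with h | h
  · rw [hdecomp, h, pow_one] at hxm; exact hx1 hxm
  · rw [hdecomp, h] at hxm; exact hx2 hxm

private lemma aux_key (q n : ℕ) (hq : 2 ≤ q) (hn : 6 < n) :
    (((q : ℤ) ^ 3 - 1) * ((q : ℤ) ^ 2 - 1) * ((q : ℤ) - 1) ∣
      ((q : ℤ) ^ (n - 1) - 1) * ((q : ℤ) ^ (n - 3) - 1) * ((q : ℤ) ^ (n - 4) - 1)) ↔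
    (n % 6 = 0 ∨ n % 6 = 1 ∨ n % 6 = 3 ∨ n % 6 = 4) := by
  set Q : ℤ := (q : ℤ) with hQ
  constructor
  · intro hdvd
    by_contra hcon
    push_neg at hcon
    have hmod : ¬ (3 ∣ n - 1) ∧ ¬ (3 ∣ n - 3) ∧ ¬ (3 ∣ n - 4) := by omega
    obtain ⟨p, hp, hp3, hpd⟩ := aux_exists_prime q hq
    have hpQ : (p : ℤ) ∣ Q ^ 3 - 1 := by
      have h1 : (p : ℤ) ∣ Q ^ 2 + Q + 1 := by
        have := Int.natCast_dvd_natCast.mpr hpd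
        push_cast at this
        simpa [hQ] using this
      have h2 : Q ^ 3 - 1 = (Q - 1) * (Q ^ 2 + Q + 1) := by ring
      exact h2 ▸ h1.mul_left _
    have hpN : (p : ℤ) ∣ (Q ^ (n - 1) - 1) * (Q ^ (n - 3) - 1) * (Q ^ (n - 4) - 1) :=
      (hpQ.mul_right _ |>.mul_right _).trans hdvd
    have hprime : Prime ((p : ℤ)) := Nat.prime_iff_prime_int.mp hp
    rcases (hprime.dvd_mul.mp hpN) with h | h
    · rcases hprime.dvd_mul.mp h with h | h
      · exact aux_ord_three hp hp3 hpd hmod.1 h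
      · exact aux_ord_three hp hp3 hpd hmod.2.1 h
    · exact aux_ord_three hp hp3 hpd hmod.2.2 h
  · intro hc
    rcases hc with h | h | h | h
    · -- 3 ∣ n-3, 2 ∣ n-4
      have d3 : Q ^ 3 - 1 ∣ Q ^ (n - 3) - 1 := aux_pow_sub_one_dvd (by omega)
      have d2 : Q ^ 2 - 1 ∣ Q ^ (n - 4) - 1 := aux_pow_sub_one_dvd (by omega)
      have d1 : Q ^ 1 - 1 ∣ Q ^ (n - 1) - 1 := aux_pow_sub_one_dvd (by omega)
      have := mul_dvd_mul (mul_dvd_mul d3 d2) d1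
      simp only [pow_one] at this
      calc (Q ^ 3 - 1) * (Q ^ 2 - 1) * (Q - 1)
          ∣ (Q ^ (n - 3) - 1) * (Q ^ (n - 4) - 1) * (Q ^ (n - 1) - 1) := this
        _ = (Q ^ (n - 1) - 1) * (Q ^ (n - 3) - 1) * (Q ^ (n - 4) - 1) := by ring
    · -- 3 ∣ n-4, 2 ∣ n-3
      have d3 : Q ^ 3 - 1 ∣ Q ^ (n - 4) - 1 := aux_pow_sub_one_dvd (by omega)
      have d2 : Q ^ 2 - 1 ∣ Q ^ (n - 3) - 1 := aux_pow_sub_one_dvd (by omega)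
      have d1 : Q ^ 1 - 1 ∣ Q ^ (n - 1) - 1 := aux_pow_sub_one_dvd (by omega)
      have := mul_dvd_mul (mul_dvd_mul d3 d2) d1
      simp only [pow_one] at this
      calc (Q ^ 3 - 1) * (Q ^ 2 - 1) * (Q - 1)
          ∣ (Q ^ (n - 4) - 1) * (Q ^ (n - 3) - 1) * (Q ^ (n - 1) - 1) := this
        _ = (Q ^ (n - 1) - 1) * (Q ^ (n - 3) - 1) * (Q ^ (n - 4) - 1) := by ring
    · -- 3 ∣ n-3, 2 ∣ n-1
      have d3 : Q ^ 3 - 1 ∣ Q ^ (n - 3) - 1 := aux_pow_sub_one_dvd (by omega)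
      have d2 : Q ^ 2 - 1 ∣ Q ^ (n - 1) - 1 := aux_pow_sub_one_dvd (by omega)
      have d1 : Q ^ 1 - 1 ∣ Q ^ (n - 4) - 1 := aux_pow_sub_one_dvd (by omega)
      have := mul_dvd_mul (mul_dvd_mul d3 d2) d1
      simp only [pow_one] at this
      calc (Q ^ 3 - 1) * (Q ^ 2 - 1) * (Q - 1)
          ∣ (Q ^ (n - 3) - 1) * (Q ^ (n - 1) - 1) * (Q ^ (n - 4) - 1) := this
        _ = (Q ^ (n - 1) - 1) * (Q ^ (n - 3) - 1) * (Q ^ (n - 4) - 1) := by ring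
    · -- 3 ∣ n-1, 2 ∣ n-4
      have d3 : Q ^ 3 - 1 ∣ Q ^ (n - 1) - 1 := aux_pow_sub_one_dvd (by omega)
      have d2 : Q ^ 2 - 1 ∣ Q ^ (n - 4) - 1 := aux_pow_sub_one_dvd (by omega)
      have d1 : Q ^ 1 - 1 ∣ Q ^ (n - 3) - 1 := aux_pow_sub_one_dvd (by omega)
      have := mul_dvd_mul (mul_dvd_mul d3 d2) d1
      simp only [pow_one] at this
      calc (Q ^ 3 - 1) * (Q ^ 2 - 1) * (Q - 1)
          ∣ (Q ^ (n - 1) - 1) * (Q ^ (n - 4) - 1) * (Q ^ (n - 3) - 1) := this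
        _ = (Q ^ (n - 1) - 1) * (Q ^ (n - 3) - 1) * (Q ^ (n - 4) - 1) := by ring

/-- For a prime power q and n > 6, the quantity
λ₁ = ((q^{n−1}−1)/(q³−1))·((q^{n−3}−1)/(q²−1))·((q^{n−4}−1)/(q−1))
is an integer if and only if n ≡ 0, 1, 3, or 4 (mod 6). -/
theorem stmt17 (q n : ℕ) (hq : ∃ p r : ℕ, p.Prime ∧ 0 < r ∧ q = p ^ r)
    (hn : 6 < n) :
    (∃ m : ℤ,
      (((q : ℚ) ^ (n - 1) - 1) / ((q : ℚ) ^ 3 - 1)) *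
        (((q : ℚ) ^ (n - 3) - 1) / ((q : ℚ) ^ 2 - 1)) *
        (((q : ℚ) ^ (n - 4) - 1) / ((q : ℚ) - 1)) = (m : ℚ)) ↔
    (n % 6 = 0 ∨ n % 6 = 1 ∨ n % 6 = 3 ∨ n % 6 = 4) := by
  obtain ⟨p, r, hp, hr, rfl⟩ := hq
  have hq2 : 2 ≤ p ^ r := Nat.one_lt_pow (by omega) hp.two_le
  set q := p ^ r with hqdef
  have hqQ : (2 : ℚ) ≤ (q : ℚ) := by exact_mod_cast hq2
  have h1 : (q : ℚ) - 1 ≠ 0 := by nlinarith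
  have h2 : (q : ℚ) ^ 2 - 1 ≠ 0 := by nlinarith [sq_nonneg ((q:ℚ) - 1)]
  have h3 : (q : ℚ) ^ 3 - 1 ≠ 0 := by nlinarith [sq_nonneg ((q:ℚ))]
  rw [← aux_key q n hq2 hn]
  set N : ℤ := ((q : ℤ) ^ (n - 1) - 1) * ((q : ℤ) ^ (n - 3) - 1) * ((q : ℤ) ^ (n - 4) - 1) with hN
  set D : ℤ := ((q : ℤ) ^ 3 - 1) * ((q : ℤ) ^ 2 - 1) * ((q : ℤ) - 1) with hD
  have hDQ : ((D : ℤ) : ℚ) ≠ 0 := by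
    rw [hD]
    push_cast
    exact mul_ne_zero (mul_ne_zero h3 h2) h1
  have heq : (((q : ℚ) ^ (n - 1) - 1) / ((q : ℚ) ^ 3 - 1)) *
        (((q : ℚ) ^ (n - 3) - 1) / ((q : ℚ) ^ 2 - 1)) *
        (((q : ℚ) ^ (n - 4) - 1) / ((q : ℚ) - 1)) = (N : ℚ) / (D : ℚ) := by
    rw [hN, hD]
    push_cast
    field_simp
  rw [heq]
  constructor
  · rintro ⟨m, hm⟩
    refine ⟨m, ?_⟩
    have hN' : (N : ℚ) = (D : ℚ) * (m : ℚ) := by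
      rw [← hm]
      field_simp
    exact_mod_cast hN'
  · rintro ⟨m, hm⟩
    refine ⟨m, ?_⟩
    rw [hm]
    push_cast
    field_simp
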